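/- arXiv:1809.02886 — 3 statements merged into one kernel-verified Lean document; each statement's English description precedes it below -/
import Mathlib

section
/- (Uniqueness of steady states.) For every choice of positive rate constants k ∈ ℝ¹⁰ and every c ∈ ℝ³ with all entries positive, there exists exactly one point x in the compatibility class P(c) with g_k(x) = 0, and this unique steady state has all nine coordinates strictly positive. -/
open Matrix Polynomial

noncomputable section

/-- The mass-action vector field of the mixed-mechanism dual-site phosphorylation
network.  Indexing: `k i` is the rate constant `k_{i+1}`, and `x i` is the
concentration `x_{i+1}`. -/
def g (k : Fin 10 → ℝ) (x : Fin 9 → ℝ) : Fin 9 → ℝ :=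
  ![-k 0 * x 0 * x 1 + k 1 * x 2 + k 9 * x 8,
    -k 0 * x 0 * x 1 + k 1 * x 2 + k 3 * x 3,
    k 0 * x 0 * x 1 - (k 1 + k 2) * x 2,
    k 2 * x 2 - k 3 * x 3,
    k 3 * x 3 - k 4 * x 4 * x 5 + k 5 * x 6,
    -k 4 * x 4 * x 5 - k 7 * x 5 * x 7 + (k 5 + k 6) * x 6 + (k 8 + k 9) * x 8,
    k 4 * x 4 * x 5 - (k 5 + k 6) * x 6,
    k 6 * x 6 - k 7 * x 5 * x 7 + k 8 * x 8,
    k 7 * x 5 * x 7 - (k 8 + k 9) * x 8]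

/-- The conservation map `φ(x) = (K_tot, P_tot, S_tot)`. -/
def phi (x : Fin 9 → ℝ) : Fin 3 → ℝ :=
  ![x 1 + x 2 + x 3,
    x 5 + x 6 + x 8,
    x 0 + x 2 + x 3 + x 4 + x 6 + x 7 + x 8]

/-- The steady-state parametrization `χ_k(x₁, x₂, x₆)`; the input is
`y = (x₁, x₂, x₆)`. -/
def chi (k : Fin 10 → ℝ) (y : Fin 3 → ℝ) : Fin 9 → ℝ :=
  ![y 0, y 1,
    k 0 * y 0 * y 1 / (k 1 + k 2),
    k 0 * k 2 * y 0 * y 1 / ((k 1 + k 2) * k 3),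
    k 0 * k 2 * (k 5 + k 6) * y 0 * y 1 / ((k 1 + k 2) * k 4 * k 6 * y 2),
    y 2,
    k 0 * k 2 * y 0 * y 1 / ((k 1 + k 2) * k 6),
    k 0 * k 2 * (k 8 + k 9) * y 0 * y 1 / ((k 1 + k 2) * k 7 * k 9 * y 2),
    k 0 * k 2 * y 0 * y 1 / ((k 1 + k 2) * k 9)]

/-- The 9×9 Jacobian matrix of `g k` at `x`: the matrix of partial
derivatives `∂gᵢ/∂xⱼ`. -/
def Jmat (k : Fin 10 → ℝ) (x : Fin 9 → ℝ) : Matrix (Fin 9) (Fin 9) ℝ :=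
  Matrix.of fun i j => fderiv ℝ (fun y => g k y i) x (Pi.single j 1)

/-- Hurwitz-matrix entries from the coefficients `b₁, …, b₆` (given as
`b 1, …, b 6`), with the conventions `b₀ = 1` and `b_m = 0` for `m < 0` or
`m > 6`. -/
def hcoef (b : ℕ → ℝ) : ℤ → ℝ := fun m =>
  if m = 0 then 1 else if 1 ≤ m ∧ m ≤ 6 then b m.toNat else 0

/-- The `i`-th Hurwitz determinant: the determinant of the `i × i` matrix whose
(1-indexed) `(j, l)` entry is `b_{2j − l}`. -/
def hurwitzDet (b : ℕ → ℝ) (i : ℕ) : ℝ :=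
  (Matrix.of fun j l : Fin i => hcoef b (2 * ((j : ℤ) + 1) - ((l : ℤ) + 1))).det

/-- The coefficients `b₁, …, b₆` of the degree-6 factor of the characteristic
polynomial of the Jacobian at the parametrized steady state `χ_k(y)`:
since `charpoly = λ³(λ⁶ + b₁λ⁵ + ⋯ + b₆)`, the coefficient `bᵢ` is the
coefficient of `λ^(9−i)` in the characteristic polynomial. -/
def bcoef (k : Fin 10 → ℝ) (y : Fin 3 → ℝ) : ℕ → ℝ := fun i =>
  ((Jmat k (chi k y)).charpoly).coeff (9 - i)

set_option maxHeartbeats 1000000 in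
/-- uniqueness of steady states: each compatibility class with
positive total amounts contains exactly one steady state, and it is positive. -/
theorem unique_steady_state (k : Fin 10 → ℝ) (hk : ∀ i, 0 < k i)
    (c : Fin 3 → ℝ) (hc : ∀ i, 0 < c i) :
    (∃! x : Fin 9 → ℝ, (∀ i, 0 ≤ x i) ∧ phi x = c ∧ g k x = 0) ∧
      (∀ x : Fin 9 → ℝ, ((∀ i, 0 ≤ x i) ∧ phi x = c ∧ g k x = 0) →
        ∀ i, 0 < x i) := by
  have hk0 := hk 0; have hk1 := hk 1; have hk2 := hk 2; have hk3 := hk 3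
  have hk4 := hk 4; have hk5 := hk 5; have hk6 := hk 6; have hk7 := hk 7
  have hk8 := hk 8; have hk9 := hk 9
  have hc0 := hc 0; have hc1 := hc 1; have hc2 := hc 2
  obtain ⟨A2, hA2⟩ : ∃ v : ℝ, v = k 0 / (k 1 + k 2) := ⟨_, rfl⟩
  obtain ⟨A3, hA3⟩ : ∃ v : ℝ, v = k 0 * k 2 / ((k 1 + k 2) * k 3) := ⟨_, rfl⟩
  obtain ⟨A6, hA6⟩ : ∃ v : ℝ, v = k 0 * k 2 / ((k 1 + k 2) * k 6) := ⟨_, rfl⟩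
  obtain ⟨A8, hA8⟩ : ∃ v : ℝ, v = k 0 * k 2 / ((k 1 + k 2) * k 9) := ⟨_, rfl⟩
  obtain ⟨D4, hD4⟩ : ∃ v : ℝ, v = (k 5 + k 6) * A6 / k 4 := ⟨_, rfl⟩
  obtain ⟨D7, hD7⟩ : ∃ v : ℝ, v = (k 8 + k 9) * A8 / k 7 := ⟨_, rfl⟩
  obtain ⟨aa, haa⟩ : ∃ v : ℝ, v = A2 + A3 := ⟨_, rfl⟩
  obtain ⟨ee, hee⟩ : ∃ v : ℝ, v = A6 + A8 := ⟨_, rfl⟩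
  obtain ⟨dd, hdd⟩ : ∃ v : ℝ, v = D4 + D7 := ⟨_, rfl⟩
  have hk12p : (0:ℝ) < k 1 + k 2 := by linarith
  have hA2p : 0 < A2 := by rw [hA2]; exact div_pos hk0 hk12p
  have hA3p : 0 < A3 := by
    rw [hA3]; exact div_pos (mul_pos hk0 hk2) (mul_pos hk12p hk3)
  have hA6p : 0 < A6 := by
    rw [hA6]; exact div_pos (mul_pos hk0 hk2) (mul_pos hk12p hk6)
  have hA8p : 0 < A8 := by
    rw [hA8]; exact div_pos (mul_pos hk0 hk2) (mul_pos hk12p hk9)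
  have hD4p : 0 < D4 := by
    rw [hD4]; exact div_pos (mul_pos (by linarith) hA6p) hk4
  have hD7p : 0 < D7 := by
    rw [hD7]; exact div_pos (mul_pos (by linarith) hA8p) hk7
  have haap : 0 < aa := by rw [haa]; linarith
  have heep : 0 < ee := by rw [hee]; linarith
  have hddp : 0 < dd := by rw [hdd]; linarith
  have hk12 : k 1 + k 2 ≠ 0 := ne_of_gt hk12p
  have hk3n : k 3 ≠ 0 := ne_of_gt hk3
  have hk4n : k 4 ≠ 0 := ne_of_gt hk4
  have hk6n : k 6 ≠ 0 := ne_of_gt hk6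
  have hk7n : k 7 ≠ 0 := ne_of_gt hk7
  have hk9n : k 9 ≠ 0 := ne_of_gt hk9
  obtain ⟨X, hX⟩ : ∃ F : ℝ → Fin 9 → ℝ, F = fun t =>
    ![t / (c 0 - aa * t), c 0 - aa * t, A2 * t, A3 * t,
      D4 * t / (c 1 - ee * t), c 1 - ee * t, A6 * t,
      D7 * t / (c 1 - ee * t), A8 * t] := ⟨_, rfl⟩
  obtain ⟨H, hH⟩ : ∃ F : ℝ → ℝ, F = fun t =>
    t / (c 0 - aa * t) + (aa + ee) * t + dd * t / (c 1 - ee * t) := ⟨_, rfl⟩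
  -- Characterization of steady states in the compatibility class
  have key : ∀ x : Fin 9 → ℝ, ((∀ i, 0 ≤ x i) ∧ phi x = c ∧ g k x = 0) →
      ∃ t : ℝ, 0 < t ∧ aa * t < c 0 ∧ ee * t < c 1 ∧ H t = c 2 ∧ x = X t := by
    rintro x ⟨hx, hphi, hg⟩
    have hp0 : x 1 + x 2 + x 3 = c 0 := congrFun hphi 0
    have hp1 : x 5 + x 6 + x 8 = c 1 := congrFun hphi 1
    have hp2 : x 0 + x 2 + x 3 + x 4 + x 6 + x 7 + x 8 = c 2 := congrFun hphi 2
    have e2 : k 0 * x 0 * x 1 - (k 1 + k 2) * x 2 = 0 := congrFun hg 2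
    have e3 : k 2 * x 2 - k 3 * x 3 = 0 := congrFun hg 3
    have e4 : k 3 * x 3 - k 4 * x 4 * x 5 + k 5 * x 6 = 0 := congrFun hg 4
    have e6 : k 4 * x 4 * x 5 - (k 5 + k 6) * x 6 = 0 := congrFun hg 6
    have e7 : k 6 * x 6 - k 7 * x 5 * x 7 + k 8 * x 8 = 0 := congrFun hg 7
    have e8 : k 7 * x 5 * x 7 - (k 8 + k 9) * x 8 = 0 := congrFun hg 8
    have hk56n : k 5 + k 6 ≠ 0 := by intro h; linarith [hk5, hk6]
    have hk89n : k 8 + k 9 ≠ 0 := by intro h; linarith [hk8, hk9]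
    -- basic positivity
    have hx5 : 0 < x 5 := by
      rcases (hx 5).lt_or_eq with h | h
      · exact h
      · exfalso
        have h6 : x 6 = 0 := by
          have h1 : (k 5 + k 6) * x 6 = 0 := by
            linear_combination -e6 - k 4 * x 4 * h
          exact (mul_eq_zero.mp h1).resolve_left hk56n
        have h8 : x 8 = 0 := by
          have h1 : (k 8 + k 9) * x 8 = 0 := by
            linear_combination -e8 - k 7 * x 7 * h
          exact (mul_eq_zero.mp h1).resolve_left hk89n
        rw [← h, h6, h8] at hp1
        linarith
    have hx5n : x 5 ≠ 0 := ne_of_gt hx5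
    have ht : 0 < x 0 * x 1 := by
      rcases (mul_nonneg (hx 0) (hx 1)).lt_or_eq with h | h
      · exact h
      · exfalso
        have h2 : x 2 = 0 := by
          have h1 : (k 1 + k 2) * x 2 = 0 := by linear_combination -e2 - k 0 * h
          exact (mul_eq_zero.mp h1).resolve_left hk12
        have h3 : x 3 = 0 := by
          have h1 : k 3 * x 3 = 0 := by linear_combination -e3 + k 2 * h2
          exact (mul_eq_zero.mp h1).resolve_left hk3n
        have h6 : x 6 = 0 := by
          have h1 : k 6 * x 6 = 0 := by linear_combination -e4 - e6 + k 3 * h3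
          exact (mul_eq_zero.mp h1).resolve_left hk6n
        have h8 : x 8 = 0 := by
          have h1 : k 9 * x 8 = 0 := by linear_combination -e7 - e8 + k 6 * h6
          exact (mul_eq_zero.mp h1).resolve_left hk9n
        have h4 : x 4 = 0 := by
          have h1 : k 4 * x 5 * x 4 = 0 := by
            linear_combination e6 + (k 5 + k 6) * h6
          exact (mul_eq_zero.mp h1).resolve_left (mul_ne_zero hk4n hx5n)
        have h7 : x 7 = 0 := by
          have h1 : k 7 * x 5 * x 7 = 0 := by
            linear_combination e8 + (k 8 + k 9) * h8
          exact (mul_eq_zero.mp h1).resolve_left (mul_ne_zero hk7n hx5n)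
        have hx1 : x 1 = c 0 := by linarith
        have hx0 : x 0 = c 2 := by linarith
        rw [hx0, hx1] at h
        exact absurd h.symm (ne_of_gt (mul_pos hc2 hc0))
    have hx0p : 0 < x 0 := by
      rcases (hx 0).lt_or_eq with h | h
      · exact h
      · exfalso; rw [← h, zero_mul] at ht; exact lt_irrefl 0 ht
    have hx1p : 0 < x 1 := by
      rcases (hx 1).lt_or_eq with h | h
      · exact h
      · exfalso; rw [← h, mul_zero] at ht; exact lt_irrefl 0 ht
    have hx1n : x 1 ≠ 0 := ne_of_gt hx1p
    -- cleared coordinate formulas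
    have c2' : (k 1 + k 2) * x 2 = k 0 * (x 0 * x 1) := by linarith
    have c3' : (k 1 + k 2) * k 3 * x 3 = k 0 * k 2 * (x 0 * x 1) := by
      linear_combination (-(k 1 + k 2)) * e3 - k 2 * e2
    have c6' : (k 1 + k 2) * k 6 * x 6 = k 0 * k 2 * (x 0 * x 1) := by
      linear_combination (-(k 1 + k 2)) * (e4 + e6) + c3'
    have c8' : (k 1 + k 2) * k 9 * x 8 = k 0 * k 2 * (x 0 * x 1) := by
      linear_combination (-(k 1 + k 2)) * (e7 + e8) + c6'
    have c4' : (k 1 + k 2) * k 4 * k 6 * (x 4 * x 5) =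
        k 0 * k 2 * (k 5 + k 6) * (x 0 * x 1) := by
      linear_combination (k 1 + k 2) * k 6 * e6 + (k 5 + k 6) * c6'
    have c7' : (k 1 + k 2) * k 7 * k 9 * (x 5 * x 7) =
        k 0 * k 2 * (k 8 + k 9) * (x 0 * x 1) := by
      linear_combination (k 1 + k 2) * k 9 * e8 + (k 8 + k 9) * c8'
    -- A-form coordinate formulas
    have hx2 : x 2 = A2 * (x 0 * x 1) := by
      rw [hA2]; field_simp; linarith [c2']
    have hx3 : x 3 = A3 * (x 0 * x 1) := by
      rw [hA3]; field_simp; linarith [c3']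
    have hx6 : x 6 = A6 * (x 0 * x 1) := by
      rw [hA6]; field_simp; linarith [c6']
    have hx8 : x 8 = A8 * (x 0 * x 1) := by
      rw [hA8]; field_simp; linarith [c8']
    have hx4 : x 4 * x 5 = D4 * (x 0 * x 1) := by
      rw [hD4, hA6]; field_simp; linarith [c4']
    have hx7 : x 5 * x 7 = D7 * (x 0 * x 1) := by
      rw [hD7, hA8]; field_simp; linarith [c7']
    have haat : aa * (x 0 * x 1) = x 2 + x 3 := by
      rw [haa, hx2, hx3]; ring
    have heet : ee * (x 0 * x 1) = x 6 + x 8 := by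
      rw [hee, hx6, hx8]; ring
    have hddt : dd * (x 0 * x 1) = (x 4 + x 7) * x 5 := by
      rw [hdd]; linear_combination (-1 : ℝ) * hx4 - hx7
    have hx1e : c 0 - aa * (x 0 * x 1) = x 1 := by linarith
    have hx5e : c 1 - ee * (x 0 * x 1) = x 5 := by linarith
    refine ⟨x 0 * x 1, ht, by linarith, by linarith, ?_, ?_⟩
    · -- H t = c 2
      simp only [hH]
      rw [hx1e, hx5e]
      have h47 : dd * (x 0 * x 1) / x 5 = x 4 + x 7 := by
        rw [div_eq_iff hx5n]; linarith [hddt]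
      rw [h47]
      rw [mul_div_assoc, div_self hx1n, mul_one]
      linear_combination hp2 + haat + heet
    · -- x = X t
      rw [hX]
      funext i
      fin_cases i
      · show x 0 = (x 0 * x 1) / (c 0 - aa * (x 0 * x 1))
        rw [hx1e, mul_div_assoc, div_self hx1n, mul_one]
      · show x 1 = c 0 - aa * (x 0 * x 1); linarith
      · exact hx2
      · exact hx3
      · show x 4 = D4 * (x 0 * x 1) / (c 1 - ee * (x 0 * x 1))
        rw [hx5e, eq_div_iff hx5n]; linarith [hx4]
      · show x 5 = c 1 - ee * (x 0 * x 1); linarith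
      · exact hx6
      · show x 7 = D7 * (x 0 * x 1) / (c 1 - ee * (x 0 * x 1))
        rw [hx5e, eq_div_iff hx5n]; linarith [hx7]
      · exact hx8
  -- X t is a steady state when H t = c 2
  have Xgood : ∀ t : ℝ, 0 < t → aa * t < c 0 → ee * t < c 1 → H t = c 2 →
      (∀ i, 0 ≤ X t i) ∧ phi (X t) = c ∧ g k (X t) = 0 := by
    intro t ht hta hte htH
    have h0a : 0 < c 0 - aa * t := by linarith
    have h0e : 0 < c 1 - ee * t := by linarith
    have h0an : c 0 - aa * t ≠ 0 := ne_of_gt h0a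
    have h0en : c 1 - ee * t ≠ 0 := ne_of_gt h0e
    simp only [hH] at htH
    rw [hX]
    refine ⟨?_, ?_, ?_⟩
    · intro i
      fin_cases i
      · exact (div_pos ht h0a).le
      · exact h0a.le
      · exact (mul_pos hA2p ht).le
      · exact (mul_pos hA3p ht).le
      · exact (div_pos (mul_pos hD4p ht) h0e).le
      · exact h0e.le
      · exact (mul_pos hA6p ht).le
      · exact (div_pos (mul_pos hD7p ht) h0e).le
      · exact (mul_pos hA8p ht).le
    · funext i
      fin_cases i
      · show (c 0 - aa * t) + A2 * t + A3 * t = c 0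
        linear_combination (-t) * haa
      · show (c 1 - ee * t) + A6 * t + A8 * t = c 1
        linear_combination (-t) * hee
      · show t / (c 0 - aa * t) + A2 * t + A3 * t + D4 * t / (c 1 - ee * t)
            + A6 * t + D7 * t / (c 1 - ee * t) + A8 * t = c 2
        linear_combination htH - t * haa - t * hee - t / (c 1 - ee * t) * hdd
    · have ca : ∀ u : ℝ, u / (c 0 - aa * t) * (c 0 - aa * t) = u :=
        fun u => div_mul_cancel₀ u h0an
      have ce : ∀ u : ℝ, u / (c 1 - ee * t) * (c 1 - ee * t) = u :=
        fun u => div_mul_cancel₀ u h0en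
      have ce' : ∀ u : ℝ, (c 1 - ee * t) * (u / (c 1 - ee * t)) = u :=
        fun u => mul_div_cancel₀ u h0en
      funext i
      fin_cases i
      · show -k 0 * (t / (c 0 - aa * t)) * (c 0 - aa * t) + k 1 * (A2 * t)
            + k 9 * (A8 * t) = 0
        simp only [mul_assoc, ca, ce, ce']; rw [hA2, hA8]; field_simp; ring
      · show -k 0 * (t / (c 0 - aa * t)) * (c 0 - aa * t) + k 1 * (A2 * t)
            + k 3 * (A3 * t) = 0
        simp only [mul_assoc, ca, ce, ce']; rw [hA2, hA3]; field_simp; ring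
      · show k 0 * (t / (c 0 - aa * t)) * (c 0 - aa * t) - (k 1 + k 2) * (A2 * t) = 0
        simp only [mul_assoc, ca, ce, ce']; rw [hA2]; field_simp; ring
      · show k 2 * (A2 * t) - k 3 * (A3 * t) = 0
        rw [hA2, hA3]; field_simp; ring
      · show k 3 * (A3 * t) - k 4 * (D4 * t / (c 1 - ee * t)) * (c 1 - ee * t)
            + k 5 * (A6 * t) = 0
        simp only [mul_assoc, ca, ce, ce']; rw [hD4, hA3, hA6]; field_simp; ring
      · show -k 4 * (D4 * t / (c 1 - ee * t)) * (c 1 - ee * t)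
            - k 7 * (c 1 - ee * t) * (D7 * t / (c 1 - ee * t))
            + (k 5 + k 6) * (A6 * t) + (k 8 + k 9) * (A8 * t) = 0
        simp only [mul_assoc, ca, ce, ce']; rw [hD4, hD7, hA6, hA8]; field_simp; ring
      · show k 4 * (D4 * t / (c 1 - ee * t)) * (c 1 - ee * t)
            - (k 5 + k 6) * (A6 * t) = 0
        simp only [mul_assoc, ca, ce, ce']; rw [hD4, hA6]; field_simp; ring
      · show k 6 * (A6 * t) - k 7 * (c 1 - ee * t) * (D7 * t / (c 1 - ee * t))
            + k 8 * (A8 * t) = 0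
        simp only [mul_assoc, ca, ce, ce']; rw [hD7, hA6, hA8]; field_simp; ring
      · show k 7 * (c 1 - ee * t) * (D7 * t / (c 1 - ee * t))
            - (k 8 + k 9) * (A8 * t) = 0
        simp only [mul_assoc, ca, ce, ce']; rw [hD7, hA8]; field_simp; ring
  -- strict monotonicity of H
  have mono : ∀ t1 t2 : ℝ, 0 ≤ t1 → t1 < t2 → aa * t2 < c 0 → ee * t2 < c 1 →
      H t1 < H t2 := by
    intro t1 t2 h0 h12 hac hec
    have d2a : 0 < c 0 - aa * t2 := by linarith
    have d2e : 0 < c 1 - ee * t2 := by linarith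
    have haat12 : aa * t1 < aa * t2 := mul_lt_mul_of_pos_left h12 haap
    have heet12 : ee * t1 < ee * t2 := mul_lt_mul_of_pos_left h12 heep
    have d1a : 0 < c 0 - aa * t1 := by linarith
    have d1e : 0 < c 1 - ee * t1 := by linarith
    have Ht1 : H t1 = t1 / (c 0 - aa * t1) + (aa + ee) * t1 + dd * t1 / (c 1 - ee * t1) := by rw [hH]
    have Ht2 : H t2 = t2 / (c 0 - aa * t2) + (aa + ee) * t2 + dd * t2 / (c 1 - ee * t2) := by rw [hH]
    rw [Ht1, Ht2]
    have hA : t1 / (c 0 - aa * t1) < t2 / (c 0 - aa * t2) := by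
      rw [div_lt_div_iff₀ d1a d2a]
      linarith [mul_lt_mul_of_pos_right h12 hc0]
    have hB : dd * t1 / (c 1 - ee * t1) < dd * t2 / (c 1 - ee * t2) := by
      rw [div_lt_div_iff₀ d1e d2e]
      linarith [mul_lt_mul_of_pos_right h12 (mul_pos hddp hc1)]
    have hC : (aa + ee) * t1 < (aa + ee) * t2 :=
      mul_lt_mul_of_pos_left h12 (by linarith)
    linarith
  -- existence of a solution of H t = c 2
  have exist_t : ∃ t : ℝ, 0 < t ∧ aa * t < c 0 ∧ ee * t < c 1 ∧ H t = c 2 := by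
    obtain ⟨tb, htb0, htba, htbe, htbH⟩ :
        ∃ tb : ℝ, 0 < tb ∧ aa * tb < c 0 ∧ ee * tb < c 1 ∧ c 2 ≤ H tb := by
      rcases le_total (c 0 / aa) (c 1 / ee) with hle | hle
      · -- bottleneck at c 0 / aa
        obtain ⟨δ, hδ⟩ : ∃ v : ℝ, v = min (1/2) (1/(2 * aa * c 2)) := ⟨_, rfl⟩
        have hδ0 : 0 < δ := by
          rw [hδ]
          exact lt_min (by norm_num) (div_pos one_pos (mul_pos (mul_pos two_pos haap) hc2))
        have hδ2 : δ ≤ 1/2 := by rw [hδ]; exact min_le_left _ _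
        have hδ3 : δ ≤ 1/(2 * aa * c 2) := by rw [hδ]; exact min_le_right _ _
        have h1δ : 0 < 1 - δ := by linarith
        obtain ⟨tb, htb⟩ : ∃ v : ℝ, v = (1 - δ) * (c 0 / aa) := ⟨_, rfl⟩
        have htbp : 0 < tb := by
          rw [htb]; exact mul_pos h1δ (div_pos hc0 haap)
        have h2a : aa * tb < c 0 := by
          rw [htb]
          have h1 : aa * ((1 - δ) * (c 0 / aa)) = (1 - δ) * c 0 := by
            field_simp
          rw [h1]
          linarith [mul_pos hδ0 hc0]
        have h2e : ee * tb < c 1 := by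
          rw [htb]
          have hle' : c 0 * ee ≤ c 1 * aa := (div_le_div_iff₀ haap heep).mp hle
          have h1 : ee * ((1 - δ) * (c 0 / aa)) = (1 - δ) * (c 0 / aa * ee) := by
            ring
          rw [h1]
          have hq : 0 < c 0 / aa * ee := mul_pos (div_pos hc0 haap) heep
          have h2 : c 0 / aa * ee ≤ c 1 := by
            rw [div_mul_eq_mul_div, div_le_iff₀ haap]; linarith
          linarith [mul_pos hδ0 hq]
        have h2H : c 2 ≤ H tb := by
          have e1 : c 0 - aa * tb = δ * c 0 := by
            rw [htb]; field_simp; ring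
          have h0e' : 0 < c 1 - ee * tb := by linarith
          simp only [hH]
          rw [e1]
          have term1 : tb / (δ * c 0) = (1 - δ) / (aa * δ) := by
            rw [htb, div_eq_div_iff (mul_pos hδ0 hc0).ne' (mul_pos haap hδ0).ne']
            field_simp
          rw [term1]
          have hterm1 : c 2 ≤ (1 - δ) / (aa * δ) := by
            rw [le_div_iff₀ (mul_pos haap hδ0)]
            have hstep : aa * c 2 * δ ≤ aa * c 2 * (1/(2 * aa * c 2)) :=
              mul_le_mul_of_nonneg_left hδ3 (mul_pos haap hc2).le
            have heq : aa * c 2 * (1/(2 * aa * c 2)) = 1/2 := by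
              rw [mul_comm, one_div, inv_mul_eq_div, div_eq_iff (mul_pos (mul_pos two_pos haap) hc2).ne']
              ring
            rw [heq] at hstep
            linarith [hstep, hδ2]
          have ht2 : 0 ≤ (aa + ee) * tb :=
            mul_nonneg (by linarith) htbp.le
          have ht3 : 0 ≤ dd * tb / (c 1 - ee * tb) :=
            (div_pos (mul_pos hddp htbp) h0e').le
          linarith
        exact ⟨tb, htbp, h2a, h2e, h2H⟩
      · -- bottleneck at c 1 / ee
        obtain ⟨δ, hδ⟩ : ∃ v : ℝ, v = min (1/2) (dd/(2 * ee * c 2)) := ⟨_, rfl⟩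
        have hδ0 : 0 < δ := by
          rw [hδ]
          exact lt_min (by norm_num) (div_pos hddp (mul_pos (mul_pos two_pos heep) hc2))
        have hδ2 : δ ≤ 1/2 := by rw [hδ]; exact min_le_left _ _
        have hδ3 : δ ≤ dd/(2 * ee * c 2) := by rw [hδ]; exact min_le_right _ _
        have h1δ : 0 < 1 - δ := by linarith
        obtain ⟨tb, htb⟩ : ∃ v : ℝ, v = (1 - δ) * (c 1 / ee) := ⟨_, rfl⟩
        have htbp : 0 < tb := by
          rw [htb]; exact mul_pos h1δ (div_pos hc1 heep)
        have h2e : ee * tb < c 1 := by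
          rw [htb]
          have h1 : ee * ((1 - δ) * (c 1 / ee)) = (1 - δ) * c 1 := by
            field_simp
          rw [h1]
          linarith [mul_pos hδ0 hc1]
        have h2a : aa * tb < c 0 := by
          rw [htb]
          have hle' : c 1 * aa ≤ c 0 * ee := (div_le_div_iff₀ heep haap).mp hle
          have h1 : aa * ((1 - δ) * (c 1 / ee)) = (1 - δ) * (c 1 / ee * aa) := by
            ring
          rw [h1]
          have hq : 0 < c 1 / ee * aa := mul_pos (div_pos hc1 heep) haap
          have h2 : c 1 / ee * aa ≤ c 0 := by
            rw [div_mul_eq_mul_div, div_le_iff₀ heep]; linarith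
          linarith [mul_pos hδ0 hq]
        have h2H : c 2 ≤ H tb := by
          have e1 : c 1 - ee * tb = δ * c 1 := by
            rw [htb]; field_simp; ring
          have h0a' : 0 < c 0 - aa * tb := by linarith
          simp only [hH]
          rw [e1]
          have term3 : dd * tb / (δ * c 1) = dd * (1 - δ) / (ee * δ) := by
            rw [htb, div_eq_div_iff (mul_pos hδ0 hc1).ne' (mul_pos heep hδ0).ne']
            field_simp
          rw [term3]
          have hterm3 : c 2 ≤ dd * (1 - δ) / (ee * δ) := by
            rw [le_div_iff₀ (mul_pos heep hδ0)]
            have hstep : ee * c 2 * δ ≤ ee * c 2 * (dd/(2 * ee * c 2)) :=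
              mul_le_mul_of_nonneg_left hδ3 (mul_pos heep hc2).le
            have heq : ee * c 2 * (dd/(2 * ee * c 2)) = dd/2 := by
              rw [mul_comm, div_mul_eq_mul_div, div_eq_div_iff (mul_pos (mul_pos two_pos heep) hc2).ne' two_pos.ne']
              ring
            rw [heq] at hstep
            linarith [hstep, mul_le_mul_of_nonneg_left hδ2 hddp.le]
          have ht1 : 0 ≤ tb / (c 0 - aa * tb) := (div_pos htbp h0a').le
          have ht2 : 0 ≤ (aa + ee) * tb := mul_nonneg (by linarith) htbp.le
          linarith
        exact ⟨tb, htbp, h2a, h2e, h2H⟩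
    -- intermediate value theorem on [0, tb]
    have hcont : ContinuousOn H (Set.Icc 0 tb) := by
      rw [hH]
      apply ContinuousOn.add
      apply ContinuousOn.add
      · refine ContinuousOn.div continuousOn_id
          ((continuous_const.sub (continuous_const.mul continuous_id)).continuousOn) ?_
        intro z hz
        have h1 : aa * z ≤ aa * tb := mul_le_mul_of_nonneg_left hz.2 haap.le
        exact ne_of_gt (by linarith : (0:ℝ) < c 0 - aa * z)
      · exact (continuous_const.mul continuous_id).continuousOn
      · refine ContinuousOn.div
          ((continuous_const.mul continuous_id).continuousOn)
          ((continuous_const.sub (continuous_const.mul continuous_id)).continuousOn) ?_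
        intro z hz
        have h1 : ee * z ≤ ee * tb := mul_le_mul_of_nonneg_left hz.2 heep.le
        exact ne_of_gt (by linarith : (0:ℝ) < c 1 - ee * z)
    have H0 : H 0 = 0 := by simp [hH]
    have hmem : c 2 ∈ Set.Icc (H 0) (H tb) := by
      rw [H0]; exact ⟨hc2.le, htbH⟩
    obtain ⟨t0, ht0m, ht0H⟩ := intermediate_value_Icc htb0.le hcont hmem
    refine ⟨t0, ?_, ?_, ?_, ht0H⟩
    · rcases ht0m.1.lt_or_eq with h | h
      · exact h
      · exfalso; rw [← h, H0] at ht0H; linarith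
    · have := mul_le_mul_of_nonneg_left ht0m.2 haap.le; linarith
    · have := mul_le_mul_of_nonneg_left ht0m.2 heep.le; linarith
  constructor
  · obtain ⟨t0, ht0, ha0, he0, hH0⟩ := exist_t
    refine ⟨X t0, Xgood t0 ht0 ha0 he0 hH0, ?_⟩
    intro y hy
    obtain ⟨s, hs, hsa, hse, hsH, rfl⟩ := key y hy
    have hst : s = t0 := by
      rcases lt_trichotomy s t0 with h | h | h
      · exfalso; have := mono s t0 hs.le h ha0 he0
        rw [hsH, hH0] at this; exact lt_irrefl _ this
      · exact h
      · exfalso; have := mono t0 s ht0.le h hsa hse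
        rw [hsH, hH0] at this; exact lt_irrefl _ this
    rw [hst]
  · intro x hxx i
    obtain ⟨s, hs, hsa, hse, hsH, hxX⟩ := key x hxx
    have h0a : 0 < c 0 - aa * s := by linarith
    have h0e : 0 < c 1 - ee * s := by linarith
    rw [hxX, hX]
    fin_cases i
    · exact div_pos hs h0a
    · exact h0a
    · exact mul_pos hA2p hs
    · exact mul_pos hA3p hs
    · exact div_pos (mul_pos hD4p hs) h0e
    · exact h0e
    · exact mul_pos hA6p hs
    · exact div_pos (mul_pos hD7p hs) h0e
    · exact mul_pos hA8p hs
end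
end

section
/- (Parametrization of the steady states.) For every choice of positive rate constants k ∈ ℝ¹⁰, the set of positive steady states {x ∈ ℝ⁹ : xᵢ > 0 for all i, and g_k(x) = 0} equals the image of the parametrization map χ_k : ℝ³_{>0} → ℝ⁹_{>0}, and χ_k is injective. -/
open Matrix Polynomial

noncomputable section

/-- the positive steady states are exactly the image of the
parametrization `χ_k` on the positive orthant, and `χ_k` is injective there. -/
theorem steady_state_parametrization (k : Fin 10 → ℝ) (hk : ∀ i, 0 < k i) :
    {x : Fin 9 → ℝ | (∀ i, 0 < x i) ∧ g k x = 0} =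
        chi k '' {y : Fin 3 → ℝ | ∀ i, 0 < y i} ∧
      Set.InjOn (chi k) {y : Fin 3 → ℝ | ∀ i, 0 < y i} := by
  have K0 := hk 0; have K1 := hk 1; have K2 := hk 2; have K3 := hk 3
  have K4 := hk 4; have K5 := hk 5; have K6 := hk 6; have K7 := hk 7
  have K8 := hk 8; have K9 := hk 9
  constructor
  · ext x
    simp only [Set.mem_setOf_eq, Set.mem_image]
    constructor
    · rintro ⟨hpos, hg⟩
      have X0 := hpos 0; have X1 := hpos 1; have X5 := hpos 5
      have e2 : k 0 * x 0 * x 1 - (k 1 + k 2) * x 2 = 0 := congrFun hg 2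
      have e3 : k 2 * x 2 - k 3 * x 3 = 0 := congrFun hg 3
      have e4 : k 3 * x 3 - k 4 * x 4 * x 5 + k 5 * x 6 = 0 := congrFun hg 4
      have e6 : k 4 * x 4 * x 5 - (k 5 + k 6) * x 6 = 0 := congrFun hg 6
      have e7 : k 6 * x 6 - k 7 * x 5 * x 7 + k 8 * x 8 = 0 := congrFun hg 7
      have e8 : k 7 * x 5 * x 7 - (k 8 + k 9) * x 8 = 0 := congrFun hg 8
      refine ⟨![x 0, x 1, x 5], fun i => ?_, ?_⟩
      · fin_cases i
        · exact X0
        · exact X1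
        · exact X5
      · funext i
        fin_cases i
        · rfl
        · rfl
        · show k 0 * x 0 * x 1 / (k 1 + k 2) = x 2
          rw [div_eq_iff (by positivity)]; linear_combination e2
        · show k 0 * k 2 * x 0 * x 1 / ((k 1 + k 2) * k 3) = x 3
          rw [div_eq_iff (by positivity)]
          linear_combination k 2 * e2 + (k 1 + k 2) * e3
        · show k 0 * k 2 * (k 5 + k 6) * x 0 * x 1
              / ((k 1 + k 2) * k 4 * k 6 * x 5) = x 4
          rw [div_eq_iff (by positivity)]
          linear_combination (k 5 + k 6) * (k 2 * e2 + (k 1 + k 2) * e3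
            + (k 1 + k 2) * e4 + (k 1 + k 2) * e6) - (k 1 + k 2) * k 6 * e6
        · rfl
        · show k 0 * k 2 * x 0 * x 1 / ((k 1 + k 2) * k 6) = x 6
          rw [div_eq_iff (by positivity)]
          linear_combination k 2 * e2 + (k 1 + k 2) * e3 + (k 1 + k 2) * e4
            + (k 1 + k 2) * e6
        · show k 0 * k 2 * (k 8 + k 9) * x 0 * x 1
              / ((k 1 + k 2) * k 7 * k 9 * x 5) = x 7
          rw [div_eq_iff (by positivity)]
          linear_combination (k 8 + k 9) * (k 2 * e2 + (k 1 + k 2) * e3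
            + (k 1 + k 2) * e4 + (k 1 + k 2) * e6 + (k 1 + k 2) * e7
            + (k 1 + k 2) * e8) - (k 1 + k 2) * k 9 * e8
        · show k 0 * k 2 * x 0 * x 1 / ((k 1 + k 2) * k 9) = x 8
          rw [div_eq_iff (by positivity)]
          linear_combination k 2 * e2 + (k 1 + k 2) * e3 + (k 1 + k 2) * e4
            + (k 1 + k 2) * e6 + (k 1 + k 2) * e7 + (k 1 + k 2) * e8
    · rintro ⟨y, hy, rfl⟩
      have Y0 := hy 0; have Y1 := hy 1; have Y2 := hy 2
      have h12 : k 1 + k 2 ≠ 0 := by positivity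
      have h3 : k 3 ≠ 0 := K3.ne'
      have h4 : k 4 ≠ 0 := K4.ne'
      have h6 : k 6 ≠ 0 := K6.ne'
      have h7 : k 7 ≠ 0 := K7.ne'
      have h9 : k 9 ≠ 0 := K9.ne'
      have hy2 : y 2 ≠ 0 := Y2.ne'
      have c0 : chi k y 0 = y 0 := rfl
      have c1 : chi k y 1 = y 1 := rfl
      have c2 : chi k y 2 = k 0 * y 0 * y 1 / (k 1 + k 2) := rfl
      have c3 : chi k y 3 = k 0 * k 2 * y 0 * y 1 / ((k 1 + k 2) * k 3) := rfl
      have c4 : chi k y 4 = k 0 * k 2 * (k 5 + k 6) * y 0 * y 1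
          / ((k 1 + k 2) * k 4 * k 6 * y 2) := rfl
      have c5 : chi k y 5 = y 2 := rfl
      have c6 : chi k y 6 = k 0 * k 2 * y 0 * y 1 / ((k 1 + k 2) * k 6) := rfl
      have c7 : chi k y 7 = k 0 * k 2 * (k 8 + k 9) * y 0 * y 1
          / ((k 1 + k 2) * k 7 * k 9 * y 2) := rfl
      have c8 : chi k y 8 = k 0 * k 2 * y 0 * y 1 / ((k 1 + k 2) * k 9) := rfl
      constructor
      · intro i
        fin_cases i
        · exact Y0
        · exact Y1
        · show (0:ℝ) < chi k y 2
          rw [c2]; positivity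
        · show (0:ℝ) < chi k y 3
          rw [c3]; positivity
        · show (0:ℝ) < chi k y 4
          rw [c4]; positivity
        · exact Y2
        · show (0:ℝ) < chi k y 6
          rw [c6]; positivity
        · show (0:ℝ) < chi k y 7
          rw [c7]; positivity
        · show (0:ℝ) < chi k y 8
          rw [c8]; positivity
      · funext i
        fin_cases i
        · show -k 0 * chi k y 0 * chi k y 1 + k 1 * chi k y 2
              + k 9 * chi k y 8 = 0
          rw [c0, c1, c2, c8]; field_simp; ring
        · show -k 0 * chi k y 0 * chi k y 1 + k 1 * chi k y 2
              + k 3 * chi k y 3 = 0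
          rw [c0, c1, c2, c3]; field_simp; ring
        · show k 0 * chi k y 0 * chi k y 1 - (k 1 + k 2) * chi k y 2 = 0
          rw [c0, c1, c2]; field_simp; ring
        · show k 2 * chi k y 2 - k 3 * chi k y 3 = 0
          rw [c2, c3]; field_simp; ring
        · show k 3 * chi k y 3 - k 4 * chi k y 4 * chi k y 5
              + k 5 * chi k y 6 = 0
          rw [c3, c4, c5, c6]; field_simp; ring
        · show -k 4 * chi k y 4 * chi k y 5 - k 7 * chi k y 5 * chi k y 7
              + (k 5 + k 6) * chi k y 6 + (k 8 + k 9) * chi k y 8 = 0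
          rw [c4, c5, c6, c7, c8]; field_simp; ring
        · show k 4 * chi k y 4 * chi k y 5 - (k 5 + k 6) * chi k y 6 = 0
          rw [c4, c5, c6]; field_simp; ring
        · show k 6 * chi k y 6 - k 7 * chi k y 5 * chi k y 7
              + k 8 * chi k y 8 = 0
          rw [c5, c6, c7, c8]; field_simp; ring
        · show k 7 * chi k y 5 * chi k y 7 - (k 8 + k 9) * chi k y 8 = 0
          rw [c5, c7, c8]; field_simp; ring
  · intro y1 h1 y2 h2 h
    funext i
    fin_cases i
    · exact congrFun h 0
    · exact congrFun h 1
    · exact congrFun h 5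
end
end

section
/- (Parametrization of the compatibility classes.) For every choice of positive rate constants k ∈ ℝ¹⁰, the composite map φ ∘ χ_k : ℝ³_{>0} → ℝ³_{>0} is a bijection, and it is given explicitly by (x₁,x₂,x₆) ↦ ( x₂ + (k₁/(k₂+k₃))(1 + k₃/k₄)·x₁x₂ , x₆ + (k₁k₃/(k₂+k₃))(1/k₇ + 1/k₁₀)·x₁x₂ , x₁ + (k₁k₃/(k₂+k₃))·[ (1/k₃ + 1/k₄ + 1/k₇ + 1/k₁₀) + (1/x₆)·( (k₆+k₇)/(k₅k₇) + (k₉+k₁₀)/(k₁₀k₈) ) ]·x₁x₂ ). -/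
open Matrix Polynomial

noncomputable section

def hfun (A C D c1 c2 E u : ℝ) : ℝ :=
  u + C * c1 * u / (1 + A * u) + D * c1 * u / (c2 + E * u)

lemma hfun_mono {A C D c1 c2 E : ℝ} (hA : 0 < A) (hC : 0 < C) (hD : 0 < D)
    (hc1 : 0 < c1) (hc2 : 0 < c2) {s t : ℝ} (hs : 0 < s) (hst : s < t)
    (hes : 0 < c2 + E * s) (het : 0 < c2 + E * t) :
    hfun A C D c1 c2 E s < hfun A C D c1 c2 E t := by
  have h1 : 0 < 1 + A * s := by nlinarith
  have h2 : 0 < 1 + A * t := by nlinarith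
  have d2 : C * c1 * s / (1 + A * s) < C * c1 * t / (1 + A * t) := by
    rw [div_lt_div_iff₀ h1 h2]
    nlinarith [mul_pos (mul_pos hC hc1) (sub_pos.2 hst)]
  have d3 : D * c1 * s / (c2 + E * s) < D * c1 * t / (c2 + E * t) := by
    rw [div_lt_div_iff₀ hes het]
    nlinarith [mul_pos (mul_pos (mul_pos hD hc1) hc2) (sub_pos.2 hst)]
  unfold hfun; linarith

lemma key_rel {A B C D c1 c2 : ℝ} (hA : 0 < A) (y : Fin 3 → ℝ) (hy : ∀ i, 0 < y i)
    (h1 : y 1 + A * (y 0 * y 1) = c1) (h2 : y 2 + B * (y 0 * y 1) = c2) :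
    0 < c2 + (A * c2 - B * c1) * y 0 ∧
    hfun A C D c1 c2 (A * c2 - B * c1) (y 0) = y 0 + (C + D / y 2) * (y 0 * y 1) := by
  have h0 := hy 0; have h1' := hy 1; have h2' := hy 2
  have hid : c2 + (A * c2 - B * c1) * y 0 = (1 + A * y 0) * y 2 := by
    rw [← h1, ← h2]; ring
  have hp : (0:ℝ) < 1 + A * y 0 := by nlinarith
  refine ⟨by rw [hid]; positivity, ?_⟩
  have hc1 : c1 = y 1 * (1 + A * y 0) := by rw [← h1]; ring
  unfold hfun
  rw [hid, hc1]
  field_simp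
  ring

lemma surj_point {A B C D : ℝ} (hA : 0 < A) (hB : 0 < B) (hC : 0 < C) (hD : 0 < D)
    (c : Fin 3 → ℝ) (hc : ∀ i, 0 < c i) (E : ℝ) (hE : E = A * c 1 - B * c 0)
    {t₁ : ℝ} (ht₁ : 0 < t₁)
    (hpos : ∀ u ∈ Set.Icc (0:ℝ) t₁, 0 < c 1 + E * u)
    (hge : c 2 ≤ hfun A C D (c 0) (c 1) E t₁) :
    ∃ y : Fin 3 → ℝ, (∀ i, 0 < y i) ∧
      ![y 1 + A * (y 0 * y 1), y 2 + B * (y 0 * y 1),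
        y 0 + (C + D / y 2) * (y 0 * y 1)] = c := by
  have hcont : ContinuousOn (hfun A C D (c 0) (c 1) E) (Set.Icc 0 t₁) := by
    unfold hfun
    refine ContinuousOn.add (ContinuousOn.add continuousOn_id ?_) ?_
    · exact ContinuousOn.div (by fun_prop) (by fun_prop)
        (fun u hu => by have := hu.1; nlinarith [mul_nonneg hA.le hu.1])
    · exact ContinuousOn.div (by fun_prop) (by fun_prop)
        (fun u hu => (hpos u hu).ne')
  have h0 : hfun A C D (c 0) (c 1) E 0 = 0 := by unfold hfun; simp
  have hIVT := intermediate_value_Icc ht₁.le hcont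
  have hmem : c 2 ∈ Set.Icc (hfun A C D (c 0) (c 1) E 0) (hfun A C D (c 0) (c 1) E t₁) := by
    rw [h0]; exact ⟨(hc 2).le, hge⟩
  obtain ⟨t, htI, hft⟩ := hIVT hmem
  have htpos : 0 < t := by
    rcases htI.1.lt_or_eq with h | h
    · exact h
    · exfalso; rw [← h, h0] at hft; exact (hc 2).ne' hft.symm
  have hden : (0:ℝ) < 1 + A * t := by nlinarith
  have hct : 0 < c 1 + E * t := hpos t htI
  refine ⟨![t, c 0 / (1 + A * t), (c 1 + E * t) / (1 + A * t)], ?_, ?_⟩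
  · intro i
    have := hc 0
    fin_cases i <;> simp <;> positivity
  · funext i
    fin_cases i
    · show c 0 / (1 + A * t) + A * (t * (c 0 / (1 + A * t))) = c 0
      field_simp
    · show (c 1 + E * t) / (1 + A * t) + B * (t * (c 0 / (1 + A * t))) = c 1
      rw [hE]; field_simp; ring
    · show t + (C + D / ((c 1 + E * t) / (1 + A * t))) * (t * (c 0 / (1 + A * t))) = c 2
      rw [← hft]; unfold hfun; field_simp; ring

lemma aux_bij {A B C D : ℝ} (hA : 0 < A) (hB : 0 < B) (hC : 0 < C) (hD : 0 < D) :
    Set.BijOn (fun y : Fin 3 → ℝ =>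
        ![y 1 + A * (y 0 * y 1), y 2 + B * (y 0 * y 1), y 0 + (C + D / y 2) * (y 0 * y 1)])
      {y | ∀ i, 0 < y i} {c | ∀ i, 0 < c i} := by
  refine ⟨?_, ?_, ?_⟩
  · intro y hy
    simp only [Set.mem_setOf_eq] at hy ⊢
    have h0 := hy 0; have h1 := hy 1; have h2 := hy 2
    intro i
    fin_cases i
    · show 0 < y 1 + A * (y 0 * y 1); positivity
    · show 0 < y 2 + B * (y 0 * y 1); positivity
    · show 0 < y 0 + (C + D / y 2) * (y 0 * y 1); positivity
  · intro y hy y' hy' heq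
    simp only [Set.mem_setOf_eq] at hy hy'
    have e0 : y 1 + A * (y 0 * y 1) = y' 1 + A * (y' 0 * y' 1) := congrFun heq 0
    have e1 : y 2 + B * (y 0 * y 1) = y' 2 + B * (y' 0 * y' 1) := congrFun heq 1
    have e2 : y 0 + (C + D / y 2) * (y 0 * y 1)
        = y' 0 + (C + D / y' 2) * (y' 0 * y' 1) := congrFun heq 2
    have hc1 : 0 < y 1 + A * (y 0 * y 1) := by
      nlinarith [mul_pos (hy 0) (hy 1), hy 1]
    have hc2 : 0 < y 2 + B * (y 0 * y 1) := by
      nlinarith [mul_pos (hy 0) (hy 1), hy 2]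
    obtain ⟨p1, q1⟩ := key_rel (B := B) (C := C) (D := D) hA y hy rfl rfl
    obtain ⟨p2, q2⟩ := key_rel (B := B) (C := C) (D := D) hA y' hy' e0.symm e1.symm
    have hf : hfun A C D (y 1 + A * (y 0 * y 1)) (y 2 + B * (y 0 * y 1))
        (A * (y 2 + B * (y 0 * y 1)) - B * (y 1 + A * (y 0 * y 1))) (y 0)
        = hfun A C D (y 1 + A * (y 0 * y 1)) (y 2 + B * (y 0 * y 1))
        (A * (y 2 + B * (y 0 * y 1)) - B * (y 1 + A * (y 0 * y 1))) (y' 0) := by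
      rw [q1, q2, e2]
    have h00 : y 0 = y' 0 := by
      rcases lt_trichotomy (y 0) (y' 0) with h | h | h
      · exact absurd hf (ne_of_lt (hfun_mono hA hC hD hc1 hc2 (hy 0) h p1 p2))
      · exact h
      · exact absurd hf.symm (ne_of_lt (hfun_mono hA hC hD hc1 hc2 (hy' 0) h p2 p1))
    have hp : (0:ℝ) < 1 + A * y 0 := by nlinarith [hy 0]
    rw [← h00] at e0 e1
    have h11 : y 1 = y' 1 := by
      have hm : y 1 * (1 + A * y 0) = y' 1 * (1 + A * y 0) := by linear_combination e0
      exact mul_right_cancel₀ hp.ne' hm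
    have h22 : y 2 = y' 2 := by rw [← h11] at e1; linarith
    funext i; fin_cases i <;> assumption
  · intro c hc
    simp only [Set.mem_setOf_eq] at hc
    have hc0 := hc 0; have hc1 := hc 1; have hc2 := hc 2
    have hQpos : 0 < D * c 0 / c 2 := by positivity
    by_cases hEQ : A * c 1 - B * c 0 < D * c 0 / c 2
    · set Q := D * c 0 / c 2 with hQ
      set E := A * c 1 - B * c 0 with hE
      have hQE : 0 < Q - E := sub_pos.2 hEQ
      set t₁ := c 1 / (Q - E) with ht₁def
      have ht₁ : 0 < t₁ := div_pos hc1 hQE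
      have hkey : c 1 + E * t₁ = c 1 * Q / (Q - E) := by
        rw [ht₁def]; field_simp; ring
      have hct1 : 0 < c 1 + E * t₁ := by rw [hkey]; positivity
      have hpos : ∀ u ∈ Set.Icc (0:ℝ) t₁, 0 < c 1 + E * u := by
        intro u hu
        rcases le_or_gt 0 E with h | h
        · nlinarith [hu.1]
        · nlinarith [hu.2]
      have hDc0 : D * c 0 = Q * c 2 := by rw [hQ]; field_simp
      have hthird : D * c 0 * t₁ / (c 1 + E * t₁) = c 2 := by
        rw [div_eq_iff hct1.ne', hkey, ht₁def, hDc0]; ring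
      have hge : c 2 ≤ hfun A C D (c 0) (c 1) E t₁ := by
        unfold hfun
        have hden : (0:ℝ) < 1 + A * t₁ := by nlinarith
        have hmid : 0 ≤ C * c 0 * t₁ / (1 + A * t₁) := by positivity
        rw [hthird]
        linarith
      obtain ⟨y, hy, hGy⟩ := surj_point hA hB hC hD c hc E hE ht₁ hpos hge
      exact ⟨y, hy, hGy⟩
    · push_neg at hEQ
      set E := A * c 1 - B * c 0 with hE
      have hEpos : 0 < E := lt_of_lt_of_le hQpos hEQ
      have hpos : ∀ u ∈ Set.Icc (0:ℝ) (c 2), 0 < c 1 + E * u := by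
        intro u hu
        nlinarith [hu.1, mul_nonneg hEpos.le hu.1]
      have hge : c 2 ≤ hfun A C D (c 0) (c 1) E (c 2) := by
        unfold hfun
        have h1 : (0:ℝ) < 1 + A * c 2 := by nlinarith
        have h2 : 0 < c 1 + E * c 2 := hpos _ ⟨hc2.le, le_refl _⟩
        have m1 : 0 ≤ C * c 0 * c 2 / (1 + A * c 2) := by positivity
        have m2 : 0 ≤ D * c 0 * c 2 / (c 1 + E * c 2) := by positivity
        linarith
      obtain ⟨y, hy, hGy⟩ := surj_point hA hB hC hD c hc E hE hc2 hpos hge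
      exact ⟨y, hy, hGy⟩

private lemma compat_class_parametrization' (k : Fin 10 → ℝ) (hk : ∀ i, 0 < k i) :
    Set.BijOn (fun y => phi (chi k y))
        {y : Fin 3 → ℝ | ∀ i, 0 < y i} {c : Fin 3 → ℝ | ∀ i, 0 < c i} ∧
      ∀ y : Fin 3 → ℝ, (∀ i, 0 < y i) →
        phi (chi k y) =
          ![y 1 + k 0 / (k 1 + k 2) * (1 + k 2 / k 3) * (y 0 * y 1),
            y 2 + k 0 * k 2 / (k 1 + k 2) * (1 / k 6 + 1 / k 9) * (y 0 * y 1),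
            y 0 + k 0 * k 2 / (k 1 + k 2) *
              ((1 / k 2 + 1 / k 3 + 1 / k 6 + 1 / k 9) +
                1 / y 2 * ((k 5 + k 6) / (k 4 * k 6) + (k 8 + k 9) / (k 9 * k 7))) *
              (y 0 * y 1)] := by
  have hk0 := hk 0; have hk1 := hk 1; have hk2 := hk 2; have hk3 := hk 3
  have hk4 := hk 4; have hk5 := hk 5; have hk6 := hk 6; have hk7 := hk 7
  have hk8 := hk 8; have hk9 := hk 9
  have h12 : (0:ℝ) < k 1 + k 2 := by linarith
  have key : ∀ y : Fin 3 → ℝ, (∀ i, 0 < y i) →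
      phi (chi k y) =
        ![y 1 + k 0 / (k 1 + k 2) * (1 + k 2 / k 3) * (y 0 * y 1),
          y 2 + k 0 * k 2 / (k 1 + k 2) * (1 / k 6 + 1 / k 9) * (y 0 * y 1),
          y 0 + k 0 * k 2 / (k 1 + k 2) *
            ((1 / k 2 + 1 / k 3 + 1 / k 6 + 1 / k 9) +
              1 / y 2 * ((k 5 + k 6) / (k 4 * k 6) + (k 8 + k 9) / (k 9 * k 7))) *
            (y 0 * y 1)] := by
    intro y hy
    have hy2 := hy 2
    funext i
    fin_cases i
    · show y 1 + k 0 * y 0 * y 1 / (k 1 + k 2)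
          + k 0 * k 2 * y 0 * y 1 / ((k 1 + k 2) * k 3)
        = y 1 + k 0 / (k 1 + k 2) * (1 + k 2 / k 3) * (y 0 * y 1)
      field_simp
      ring
    · show y 2 + k 0 * k 2 * y 0 * y 1 / ((k 1 + k 2) * k 6)
          + k 0 * k 2 * y 0 * y 1 / ((k 1 + k 2) * k 9)
        = y 2 + k 0 * k 2 / (k 1 + k 2) * (1 / k 6 + 1 / k 9) * (y 0 * y 1)
      field_simp
      ring
    · show y 0 + k 0 * y 0 * y 1 / (k 1 + k 2)
          + k 0 * k 2 * y 0 * y 1 / ((k 1 + k 2) * k 3)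
          + k 0 * k 2 * (k 5 + k 6) * y 0 * y 1 / ((k 1 + k 2) * k 4 * k 6 * y 2)
          + k 0 * k 2 * y 0 * y 1 / ((k 1 + k 2) * k 6)
          + k 0 * k 2 * (k 8 + k 9) * y 0 * y 1 / ((k 1 + k 2) * k 7 * k 9 * y 2)
          + k 0 * k 2 * y 0 * y 1 / ((k 1 + k 2) * k 9)
        = y 0 + k 0 * k 2 / (k 1 + k 2) *
            ((1 / k 2 + 1 / k 3 + 1 / k 6 + 1 / k 9) +
              1 / y 2 * ((k 5 + k 6) / (k 4 * k 6) + (k 8 + k 9) / (k 9 * k 7))) *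
            (y 0 * y 1)
      field_simp
      ring
  refine ⟨?_, key⟩
  have hA : (0:ℝ) < k 0 / (k 1 + k 2) * (1 + k 2 / k 3) := by positivity
  have hB : (0:ℝ) < k 0 * k 2 / (k 1 + k 2) * (1 / k 6 + 1 / k 9) := by positivity
  have hC : (0:ℝ) < k 0 * k 2 / (k 1 + k 2) * (1 / k 2 + 1 / k 3 + 1 / k 6 + 1 / k 9) := by
    positivity
  have hD : (0:ℝ) < k 0 * k 2 / (k 1 + k 2) *
      ((k 5 + k 6) / (k 4 * k 6) + (k 8 + k 9) / (k 9 * k 7)) := by positivity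
  refine (aux_bij hA hB hC hD).congr ?_
  intro y hy
  simp only [Set.mem_setOf_eq] at hy
  have hy2 := hy 2
  show _ = phi (chi k y)
  rw [key y hy]
  funext i
  fin_cases i
  · rfl
  · rfl
  · show y 0 + (k 0 * k 2 / (k 1 + k 2) * (1 / k 2 + 1 / k 3 + 1 / k 6 + 1 / k 9) +
        k 0 * k 2 / (k 1 + k 2) *
          ((k 5 + k 6) / (k 4 * k 6) + (k 8 + k 9) / (k 9 * k 7)) / y 2) * (y 0 * y 1) = _
    simp only [Fin.reduceFinMk, Matrix.cons_val]
    field_simp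

/-- `φ ∘ χ_k` is a bijection from ℝ³_{>0} to ℝ³_{>0}, with the
given explicit formula. -/
theorem compat_class_parametrization (k : Fin 10 → ℝ) (hk : ∀ i, 0 < k i) :
    Set.BijOn (fun y => phi (chi k y))
        {y : Fin 3 → ℝ | ∀ i, 0 < y i} {c : Fin 3 → ℝ | ∀ i, 0 < c i} ∧
      ∀ y : Fin 3 → ℝ, (∀ i, 0 < y i) →
        phi (chi k y) =
          ![y 1 + k 0 / (k 1 + k 2) * (1 + k 2 / k 3) * (y 0 * y 1),
            y 2 + k 0 * k 2 / (k 1 + k 2) * (1 / k 6 + 1 / k 9) * (y 0 * y 1),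
            y 0 + k 0 * k 2 / (k 1 + k 2) *
              ((1 / k 2 + 1 / k 3 + 1 / k 6 + 1 / k 9) +
                1 / y 2 * ((k 5 + k 6) / (k 4 * k 6) + (k 8 + k 9) / (k 9 * k 7))) *
              (y 0 * y 1)] := by
  exact compat_class_parametrization' k hk
end
end
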